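/- Let 0 ≤ μ < L < ∞ and let f : ℝ^d → ℝ be differentiable. Then f is convex, its gradient ∇f is L-Lipschitz, and x ↦ f(x) − (μ/2)‖x‖² is convex, if and only if the function g defined by g(x) = f(x) − (μ/2)‖x‖² is convex, differentiable, and its gradient ∇g is (L−μ)-Lipschitz. -/

import Mathlib

open scoped RealInnerProductSpace
open InnerProductSpace Set

section Helpers
variable {E : Type*} [NormedAddCommGroup E] [InnerProductSpace ℝ E] [CompleteSpace E]

lemma hasGradientAt_half_sq (c : ℝ) (x : E) :
    HasGradientAt (fun y : E => c / 2 * ‖y‖ ^ 2) (c • x) x := by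
  have h2 := (hasFDerivAt_id x).inner ℝ (hasFDerivAt_id x)
  have h3 := h2.const_mul (c / 2)
  simp only [real_inner_self_eq_norm_sq, id] at h3
  rw [hasGradientAt_iff_hasFDerivAt]
  refine h3.congr_fderiv ?_
  ext v
  simp [fderivInnerCLM_apply, real_inner_smul_left, real_inner_comm x v]
  ring

lemma HasGradientAt.sub' {f g : E → ℝ} {a b x : E} (hf : HasGradientAt f a x)
    (hg : HasGradientAt g b x) : HasGradientAt (fun y => f y - g y) (a - b) x := by
  rw [hasGradientAt_iff_hasFDerivAt] at *
  refine (hf.sub hg).congr_fderiv ?_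
  ext v
  simp [inner_sub_left]

lemma hasDerivAt_line {h : E → ℝ} (hd : Differentiable ℝ h) (x v : E) (t : ℝ) :
    HasDerivAt (fun s : ℝ => h (x + s • v)) ⟪gradient h (x + t • v), v⟫ t := by
  have hline : HasDerivAt (fun s : ℝ => x + s • v) v t := by
    simpa using ((hasDerivAt_id t).smul_const v).const_add x
  have hg := (hd (x + t • v)).hasGradientAt
  have := hg.hasFDerivAt.comp_hasDerivAt t hline
  exact this

lemma hasDerivAt_line' {h : E → ℝ} (hd : Differentiable ℝ h) (x v : E) (t : ℝ) :
    HasDerivAt (fun s : ℝ => h (x + s • v)) ⟪gradient h (x + t • v), v⟫ t := by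
  have hline : HasDerivAt (fun s : ℝ => x + s • v) v t := by
    simpa using ((hasDerivAt_id t).smul_const v).const_add x
  have hg := (hd (x + t • v)).hasGradientAt
  exact hg.hasFDerivAt.comp_hasDerivAt t hline

lemma foc {h : E → ℝ} (hc : ConvexOn ℝ Set.univ h) (hd : Differentiable ℝ h) (x y : E) :
    h x + ⟪gradient h x, y - x⟫ ≤ h y := by
  set v := y - x with hv
  have hφc : ConvexOn ℝ Set.univ (fun s : ℝ => h (x + s • v)) := by
    have := hc.comp_affineMap (AffineMap.lineMap x y)
    rw [preimage_univ] at this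
    refine this.congr fun s _ => ?_
    simp only [Function.comp_apply, AffineMap.lineMap_apply, hv]
    rw [add_comm]
    rfl
  have hder := hasDerivAt_line' hd x v 0
  simp only [zero_smul, add_zero] at hder
  have hslope := hφc.le_slope_of_hasDerivAt (mem_univ (0:ℝ)) (mem_univ (1:ℝ)) one_pos hder
  simp only [slope_def_field, zero_smul, add_zero, one_smul] at hslope
  have h1 : x + v = y := by simp [hv]
  rw [h1] at hslope
  -- hslope : ⟪∇h x, v⟫ ≤ (h y - h x) / (1 - 0)
  have : ⟪gradient h x, v⟫ ≤ h y - h x := by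
    simpa using hslope
  linarith

lemma convexOn_of_monotone_gradient {h : E → ℝ} (hd : Differentiable ℝ h)
    (hm : ∀ x y, 0 ≤ ⟪gradient h x - gradient h y, x - y⟫) :
    ConvexOn ℝ Set.univ h := by
  refine ⟨convex_univ, fun x _ y _ a b ha hb hab => ?_⟩
  set v := y - x with hv
  set φ := fun s : ℝ => h (x + s • v) with hφ
  have hφd : ∀ t, HasDerivAt φ ⟪gradient h (x + t • v), v⟫ t := hasDerivAt_line' hd x v
  have hdiff : Differentiable ℝ φ := fun t => (hφd t).differentiableAt
  have hmono : Monotone (deriv φ) := by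
    intro s t hst
    rw [(hφd s).deriv, (hφd t).deriv]
    have key := hm (x + t • v) (x + s • v)
    have heq : x + t • v - (x + s • v) = (t - s) • v := by
      rw [add_sub_add_left_eq_sub, ← sub_smul]
    rw [heq, real_inner_smul_right, inner_sub_left] at key
    rcases eq_or_lt_of_le hst with rfl | hlt
    · exact le_refl _
    · nlinarith [key, sub_pos.mpr hlt]
  have hφc := hmono.convexOn_univ_of_deriv hdiff
  have key := hφc.2 (mem_univ (0:ℝ)) (mem_univ (1:ℝ)) ha hb hab
  have h1 : x + v = y := by simp [hv]
  have h2 : a • x + b • y = x + b • v := by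
    rw [hv, smul_sub]
    have hba : a = 1 - b := by linarith
    rw [hba, sub_smul, one_smul]
    abel
  simp only [hφ, smul_eq_mul, mul_zero, mul_one, zero_add, zero_smul, add_zero, one_smul,
    h1] at key
  rw [h2]
  simpa using key

lemma bregman_lower {g : E → ℝ} {K : ℝ} (hK : 0 < K)
    (hgc : ConvexOn ℝ Set.univ g) (hgd : Differentiable ℝ g)
    (hupper : ∀ x y : E, g y ≤ g x + ⟪gradient g x, y - x⟫ + K / 2 * ‖y - x‖ ^ 2)
    (x y : E) :
    1 / (2 * K) * ‖gradient g y - gradient g x‖ ^ 2 ≤ g y - g x - ⟪gradient g x, y - x⟫ := by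
  set u := gradient g y - gradient g x with hu
  set z := y - (1 / K) • u with hz
  have h1 := foc hgc hgd x z
  have h2 := hupper y z
  have hzx : z - x = (y - x) - (1 / K) • u := by rw [hz]; abel
  have hzy : z - y = -((1 / K) • u) := by rw [hz]; abel
  have e1 : ⟪gradient g x, z - x⟫ = ⟪gradient g x, y - x⟫ - 1 / K * ⟪gradient g x, u⟫ := by
    rw [hzx, inner_sub_right, real_inner_smul_right]
  have e2 : ⟪gradient g y, z - y⟫ = -(1 / K * ⟪gradient g y, u⟫) := by
    rw [hzy, inner_neg_right, real_inner_smul_right]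
  have e3 : ‖z - y‖ ^ 2 = (1 / K) ^ 2 * ‖u‖ ^ 2 := by
    rw [hzy, norm_neg, norm_smul, mul_pow]
    congr 1
    rw [Real.norm_eq_abs, sq_abs]
  have e4 : ⟪gradient g y, u⟫ - ⟪gradient g x, u⟫ = ‖u‖ ^ 2 := by
    rw [← inner_sub_left, ← hu, real_inner_self_eq_norm_sq]
  rw [e1] at h1
  rw [e2, e3] at h2
  have hKne : (K : ℝ) ≠ 0 := ne_of_gt hK
  have c1 : K / 2 * ((1 / K) ^ 2 * ‖u‖ ^ 2) = 1 / (2 * K) * ‖u‖ ^ 2 := by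
    field_simp
  have c2 : 1 / K * ⟪gradient g y, u⟫ - 1 / K * ⟪gradient g x, u⟫ = 1 / K * ‖u‖ ^ 2 := by
    rw [← mul_sub, e4]
  have c3 : 1 / K * ‖u‖ ^ 2 - 1 / (2 * K) * ‖u‖ ^ 2 = 1 / (2 * K) * ‖u‖ ^ 2 := by
    field_simp; ring
  nlinarith [h1, h2, c1, c2, c3]

lemma lipschitz_gradient_of_sandwich {g : E → ℝ} {K : ℝ} (hK : 0 < K)
    (hgc : ConvexOn ℝ Set.univ g) (hgd : Differentiable ℝ g)
    (hq : ConvexOn ℝ Set.univ (fun x : E => K / 2 * ‖x‖ ^ 2 - g x)) (x y : E) :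
    ‖gradient g x - gradient g y‖ ≤ K * ‖x - y‖ := by
  have hqd : Differentiable ℝ (fun x : E => K / 2 * ‖x‖ ^ 2 - g x) := fun z =>
    ((hasGradientAt_half_sq K z).differentiableAt).sub (hgd z)
  have hgradq : ∀ z : E, gradient (fun x : E => K / 2 * ‖x‖ ^ 2 - g x) z
      = K • z - gradient g z := fun z =>
    ((hasGradientAt_half_sq K z).sub' (hgd z).hasGradientAt).gradient
  have hupper : ∀ a b : E, g b ≤ g a + ⟪gradient g a, b - a⟫ + K / 2 * ‖b - a‖ ^ 2 := by
    intro a b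
    have hfoc := foc hq hqd a b
    rw [hgradq] at hfoc
    have hn : ‖b - a‖ ^ 2 = ‖b‖ ^ 2 - 2 * ⟪b, a⟫ + ‖a‖ ^ 2 := by
      rw [← real_inner_self_eq_norm_sq, inner_sub_sub_self,
        real_inner_self_eq_norm_sq, real_inner_self_eq_norm_sq, real_inner_comm a b]
      ring
    rw [inner_sub_left, real_inner_smul_left, inner_sub_right,
      real_inner_self_eq_norm_sq] at hfoc
    rw [hn]
    have hab : ⟪a, b⟫ = ⟪b, a⟫ := real_inner_comm b a
    nlinarith [hfoc]
  have k1 := bregman_lower hK hgc hgd hupper x y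
  have k2 := bregman_lower hK hgc hgd hupper y x
  set u := gradient g y - gradient g x with hu
  have hnrev : ‖gradient g x - gradient g y‖ = ‖u‖ := by rw [hu, norm_sub_rev]
  rw [hnrev] at k2 ⊢
  have hua : ⟪u, y - x⟫ = -⟪gradient g x, y - x⟫ - ⟪gradient g y, x - y⟫ := by
    have hxy : x - y = -(y - x) := by abel
    rw [hu, inner_sub_left, hxy, inner_neg_right]
    ring
  have hCS : ⟪u, y - x⟫ ≤ ‖u‖ * ‖y - x‖ := real_inner_le_norm u (y - x)
  have hsum : 1 / K * ‖u‖ ^ 2 ≤ ‖u‖ * ‖y - x‖ := by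
    have hhalf : 1 / (2 * K) * ‖u‖ ^ 2 + 1 / (2 * K) * ‖u‖ ^ 2 = 1 / K * ‖u‖ ^ 2 := by
      field_simp
      ring
    linarith [k1, k2, hua, hCS]
  have hxyn : ‖x - y‖ = ‖y - x‖ := norm_sub_rev x y
  rw [hxyn]
  rcases eq_or_lt_of_le (norm_nonneg u) with h0 | hpos
  · rw [← h0]
    positivity
  · have hKmul : K * (1 / K * ‖u‖ ^ 2) = ‖u‖ ^ 2 := by
      field_simp
    nlinarith [mul_le_mul_of_nonneg_left hsum (le_of_lt hK), hpos]

end Helpers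


/-- Theorem 3 of the paper (minimal curvature subtraction, finite `L`):
a differentiable `f : ℝ^d → ℝ` is `L`-smooth and `μ`-strongly convex iff
`g = f - (μ/2)‖·‖²` is convex, differentiable, with `(L-μ)`-Lipschitz gradient. -/
theorem smooth_strongly_convex_iff_curvature_subtraction {d : ℕ} (μ L : ℝ)
    (hμ : 0 ≤ μ) (hμL : μ < L)
    (f : EuclideanSpace ℝ (Fin d) → ℝ) (hf : Differentiable ℝ f) :
    (ConvexOn ℝ Set.univ f ∧
      (∀ x y, ‖gradient f x - gradient f y‖ ≤ L * ‖x - y‖) ∧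
      ConvexOn ℝ Set.univ (fun x => f x - μ / 2 * ‖x‖ ^ 2)) ↔
    (ConvexOn ℝ Set.univ (fun x => f x - μ / 2 * ‖x‖ ^ 2) ∧
      Differentiable ℝ (fun x : EuclideanSpace ℝ (Fin d) => f x - μ / 2 * ‖x‖ ^ 2) ∧
      (∀ x y, ‖gradient (fun x => f x - μ / 2 * ‖x‖ ^ 2) x
          - gradient (fun x => f x - μ / 2 * ‖x‖ ^ 2) y‖ ≤ (L - μ) * ‖x - y‖)) := by
  have hgd : Differentiable ℝ (fun x : EuclideanSpace ℝ (Fin d) => f x - μ / 2 * ‖x‖ ^ 2) :=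
    fun x => (hf x).sub (hasGradientAt_half_sq μ x).differentiableAt
  have grad_g : ∀ x : EuclideanSpace ℝ (Fin d),
      gradient (fun x => f x - μ / 2 * ‖x‖ ^ 2) x = gradient f x - μ • x := fun x =>
    (((hf x).hasGradientAt).sub' (hasGradientAt_half_sq μ x)).gradient
  constructor
  · rintro ⟨hfc, hflip, hgc⟩
    refine ⟨hgc, hgd, ?_⟩
    have hq : ConvexOn ℝ Set.univ
        (fun x : EuclideanSpace ℝ (Fin d) => (L - μ) / 2 * ‖x‖ ^ 2 - (f x - μ / 2 * ‖x‖ ^ 2)) := by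
      have heq : (fun x : EuclideanSpace ℝ (Fin d) => (L - μ) / 2 * ‖x‖ ^ 2 - (f x - μ / 2 * ‖x‖ ^ 2))
          = fun x : EuclideanSpace ℝ (Fin d) => L / 2 * ‖x‖ ^ 2 - f x := by
        funext x; ring
      rw [heq]
      have hLd : Differentiable ℝ (fun x : EuclideanSpace ℝ (Fin d) => L / 2 * ‖x‖ ^ 2 - f x) :=
        fun z => ((hasGradientAt_half_sq L z).differentiableAt).sub (hf z)
      have hgradL : ∀ z : EuclideanSpace ℝ (Fin d),
          gradient (fun x => L / 2 * ‖x‖ ^ 2 - f x) z = L • z - gradient f z := fun z =>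
        ((hasGradientAt_half_sq L z).sub' (hf z).hasGradientAt).gradient
      refine convexOn_of_monotone_gradient hLd fun x y => ?_
      rw [hgradL, hgradL]
      have hre : L • x - gradient f x - (L • y - gradient f y)
          = L • (x - y) - (gradient f x - gradient f y) := by
        rw [smul_sub]; abel
      rw [hre, inner_sub_left, real_inner_smul_left, real_inner_self_eq_norm_sq]
      have hCS : ⟪gradient f x - gradient f y, x - y⟫
          ≤ ‖gradient f x - gradient f y‖ * ‖x - y‖ := real_inner_le_norm _ _
      have hl := mul_le_mul_of_nonneg_right (hflip x y) (norm_nonneg (x - y))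
      nlinarith [hCS, hl]
    exact fun x y => lipschitz_gradient_of_sandwich (by linarith) hgc hgd hq x y
  · rintro ⟨hgc, _, hglip⟩
    have hqconv : ConvexOn ℝ Set.univ (fun x : EuclideanSpace ℝ (Fin d) => μ / 2 * ‖x‖ ^ 2) := by
      have hqd : Differentiable ℝ (fun x : EuclideanSpace ℝ (Fin d) => μ / 2 * ‖x‖ ^ 2) :=
        fun z => (hasGradientAt_half_sq μ z).differentiableAt
      have hgradqq : ∀ z : EuclideanSpace ℝ (Fin d),
          gradient (fun x => μ / 2 * ‖x‖ ^ 2) z = μ • z := fun z =>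
        (hasGradientAt_half_sq μ z).gradient
      refine convexOn_of_monotone_gradient hqd fun x y => ?_
      rw [hgradqq, hgradqq, ← smul_sub, real_inner_smul_left, real_inner_self_eq_norm_sq]
      positivity
    have hfc : ConvexOn ℝ Set.univ f := by
      have hadd := hgc.add hqconv
      have heq : ((fun x : EuclideanSpace ℝ (Fin d) => f x - μ / 2 * ‖x‖ ^ 2)
          + fun x : EuclideanSpace ℝ (Fin d) => μ / 2 * ‖x‖ ^ 2) = f := by
        funext x; simp only [Pi.add_apply]; ring
      rwa [heq] at hadd
    refine ⟨hfc, ?_, hgc⟩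
    intro x y
    have hl := hglip x y
    rw [grad_g, grad_g] at hl
    have hdecomp : gradient f x - gradient f y
        = (gradient f x - μ • x - (gradient f y - μ • y)) + μ • (x - y) := by
      rw [smul_sub]; abel
    rw [hdecomp]
    refine le_trans (norm_add_le _ _) ?_
    rw [norm_smul, Real.norm_eq_abs, abs_of_nonneg hμ]
    linarith
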